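/- For the dyadic spiral u as above and R = [[1, -2],[1, 1]]: at each point t_n = 2^{-n}, u(t_n) lies either on the line u₁ + u₂ = 0 or on the line u₁ - 2u₂ = 0; moreover for t in any interval [2^{-(4k+1)}, 2^{-4k}] (where u₂ increases) one has (R u(t))₂ = u₁(t) + u₂(t) ≤ 0. -/

import Mathlib

open Set Matrix

/-- The vertices of Mandelbaum's dyadic spiral: `SpiralP n` is the value of the
spiral at the dyadic time `2 ^ (-n)`. -/
noncomputable def SpiralP (n : ℕ) : Fin 2 → ℝ :=
  let k : ℤ := (n / 4 : ℕ)
  if n % 4 = 0 then ![-(2:ℝ) ^ (-2 * k), (2:ℝ) ^ (-2 * k)]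
  else if n % 4 = 1 then ![-(2:ℝ) ^ (-2 * k), -(2:ℝ) ^ (-2 * k - 1)]
  else if n % 4 = 2 then ![(2:ℝ) ^ (-2 * k - 1), -(2:ℝ) ^ (-2 * k - 1)]
  else ![(2:ℝ) ^ (-2 * k - 1), (2:ℝ) ^ (-2 * k - 2)]

/-- `u : [0,1] → ℝ²` is the dyadic spiral: `u 0 = 0`, `u (2 ^ (-n)) = SpiralP n`,
with linear interpolation on each interval `[2 ^ (-(n+1)), 2 ^ (-n)]`. -/
def IsSpiral (u : ℝ → Fin 2 → ℝ) : Prop :=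
  u 0 = 0 ∧
  ∀ n : ℕ, ∀ s ∈ Set.Icc (0:ℝ) 1,
    u ((1 - s) * (2:ℝ) ^ (-(n:ℤ) - 1) + s * (2:ℝ) ^ (-(n:ℤ)))
      = fun j => (1 - s) * SpiralP (n + 1) j + s * SpiralP n j

theorem spiral_on_lines (u : ℝ → Fin 2 → ℝ) (hu : IsSpiral u) :
    (∀ n : ℕ, u ((2:ℝ) ^ (-(n:ℤ))) 0 + u ((2:ℝ) ^ (-(n:ℤ))) 1 = 0
        ∨ u ((2:ℝ) ^ (-(n:ℤ))) 0 - 2 * u ((2:ℝ) ^ (-(n:ℤ))) 1 = 0)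
    ∧ ∀ k : ℕ, ∀ t ∈ Set.Icc ((2:ℝ) ^ (-(4 * (k:ℤ)) - 1)) ((2:ℝ) ^ (-(4 * (k:ℤ)))),
        u t 0 + u t 1 ≤ 0 := by
  obtain ⟨h0, hlin⟩ := hu
  have hval : ∀ n : ℕ, u ((2:ℝ) ^ (-(n:ℤ))) = SpiralP n := by
    intro n
    have h := hlin n 1 (by norm_num)
    simpa using h
  constructor
  · intro n
    rw [hval]
    set k : ℤ := ((n / 4 : ℕ) : ℤ) with hk
    have hsplit : (-2*k - 1 : ℤ) = -2*k + (-1) := by ring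
    have hsplit2 : (-2*k - 2 : ℤ) = (-2*k - 1) + (-1) := by ring
    have h : n % 4 = 0 ∨ n % 4 = 1 ∨ n % 4 = 2 ∨ n % 4 = 3 := by omega
    rcases h with h|h|h|h
    · left; simp [SpiralP, h, ← hk]
    · right; simp only [SpiralP, h, ← hk]
      norm_num
      rw [show (-(2*k) - 1 : ℤ) = -(2*k) + (-1) by ring,
        zpow_add₀ (by norm_num : (2:ℝ) ≠ 0)]
      simp [_root_.zpow_neg]
      ring
    · left; simp [SpiralP, h, ← hk]
    · right; simp only [SpiralP, h, ← hk]
      norm_num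
      rw [show (-(2*k) - 2 : ℤ) = (-(2*k) - 1) + (-1) by ring,
        zpow_add₀ (by norm_num : (2:ℝ) ≠ 0)]
      simp [_root_.zpow_neg]
      ring
  · intro k t ht
    obtain ⟨h1, h2⟩ := ht
    set a : ℝ := (2:ℝ) ^ (-(4 * (k:ℤ)) - 1) with ha
    set b : ℝ := (2:ℝ) ^ (-(4 * (k:ℤ))) with hb
    have hab : a < b := by
      apply zpow_lt_zpow_right₀ (by norm_num : (1:ℝ) < 2)
      omega
    set s : ℝ := (t - a) / (b - a) with hs
    have hba : b - a > 0 := by linarith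
    have hs0 : 0 ≤ s := div_nonneg (by linarith) (by linarith)
    have hs1 : s ≤ 1 := by
      rw [div_le_one hba]; linarith
    have ht' : t = (1 - s) * a + s * b := by
      have hsm : s * (b - a) = t - a := by rw [hs]; exact div_mul_cancel₀ _ hba.ne'
      linarith
    have hcast : (-(((4 * k : ℕ)) : ℤ)) = -(4 * (k:ℤ)) := by push_cast; ring
    have h := hlin (4 * k) s ⟨hs0, hs1⟩
    rw [hcast] at h
    rw [← ha, ← hb, ← ht'] at h
    rw [h]
    have hP1 : SpiralP (4 * k + 1) 0 + SpiralP (4 * k + 1) 1 ≤ 0 := by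
      have hm : (4 * k + 1) % 4 = 1 := by omega
      have hd : (4 * k + 1) / 4 = k := by omega
      simp only [SpiralP, hm, hd]
      norm_num
      have : (0:ℝ) < (2:ℝ) ^ (-(2 * (k:ℤ)) - 1) := by positivity
      have : (0:ℝ) < ((2:ℝ) ^ (2 * (k:ℤ)))⁻¹ := by positivity
      linarith
    have hP0 : SpiralP (4 * k) 0 + SpiralP (4 * k) 1 = 0 := by
      have hm : (4 * k) % 4 = 0 := by omega
      simp [SpiralP, hm]
    simp only
    nlinarith [hP1, hP0, hs0, hs1]
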